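/- arXiv:2605.23379 — 2 statements merged into one kernel-verified Lean document; each statement's English description precedes it below -/
import Mathlib

section
/- Let T be a finite tree with at least one edge, v a vertex of T with degree d = d_T(v), and T' the tree obtained from T by attaching one new pendant edge at v. Let f : E(T) → ℝ be a unit vector (⟨f,f⟩ = 1) with A_v(f) = Σ_{e ∋ v} f_e² > 0, set μ = ⟨f, R_T f⟩ and ρ_v = S_v(f)²/A_v(f) where S_v(f) = Σ_{e ∋ v} f_e, and assume μ ≥ −1. If 2(d + 2 + μ(d+1)) ≥ ρ_v (2 + μ(d+1)), then there exists y ∈ ℝ such that ⟨f_y, R_{T'} f_y⟩ / ⟨f_y, f_y⟩ ≥ μ, where f_y is the extension of f to E(T') taking the value y on the new edge. -/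
open SimpleGraph Matrix Finset

/-- The largest eigenvalue of a real matrix, defined as the supremum of its set of
real eigenvalues. -/
noncomputable def lambdaMax {n : Type*} [Fintype n] (M : Matrix n n ℝ) : ℝ :=
  sSup {μ : ℝ | ∃ x : n → ℝ, x ≠ 0 ∧ M.mulVec x = μ • x}

/-- The Ricci matrix of a graph: `(R)_{e,e} = -(1/d_x + 1/d_y)` for `e = {x,y}`,
`(R)_{e,e'} = 1/d_z` for distinct edges sharing the endpoint `z`, and `0` for
disjoint edges. -/
noncomputable def ricciMatrix {V : Type*} [Fintype V] [DecidableEq V]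
    (G : SimpleGraph V) [DecidableRel G.Adj] :
    Matrix G.edgeSet G.edgeSet ℝ := fun e e' =>
  (if e = e' then (-1 : ℝ) else 1) *
    ∑ z : V, (if z ∈ (e : Sym2 V) ∧ z ∈ (e' : Sym2 V) then ((G.degree z : ℝ))⁻¹ else 0)

/-- Adjacency for the tree obtained by attaching `k` new pendant vertices at `v`. -/
def addLeavesAdj {V : Type*} (G : SimpleGraph V) (v : V) (k : ℕ) :
    V ⊕ Fin k → V ⊕ Fin k → Prop
  | Sum.inl x, Sum.inl y => G.Adj x y
  | Sum.inl x, Sum.inr _ => x = v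
  | Sum.inr _, Sum.inl y => y = v
  | Sum.inr _, Sum.inr _ => False

/-- The tree obtained from `G` by attaching `k` new pendant edges at `v`:
`k` new vertices `Sum.inr i`, each joined to `v` by a new edge. -/
def addLeaves {V : Type*} (G : SimpleGraph V) (v : V) (k : ℕ) :
    SimpleGraph (V ⊕ Fin k) where
  Adj := addLeavesAdj G v k
  symm := by
    constructor
    intro a b h
    cases a <;> cases b <;> simp_all [addLeavesAdj] <;> exact h.symm
  loopless := by
    constructor
    intro a
    cases a <;> simp [addLeavesAdj]

instance {V : Type*} [DecidableEq V] (G : SimpleGraph V) [DecidableRel G.Adj]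
    (v : V) (k : ℕ) : DecidableRel (addLeaves G v k).Adj := fun a b =>
  match a, b with
  | Sum.inl x, Sum.inl y => inferInstanceAs (Decidable (G.Adj x y))
  | Sum.inl x, Sum.inr _ => inferInstanceAs (Decidable (x = v))
  | Sum.inr _, Sum.inl y => inferInstanceAs (Decidable (y = v))
  | Sum.inr _, Sum.inr _ => inferInstanceAs (Decidable False)

/-- The extension `f_y` of an edge function `f` on `G` to `addLeaves G v 1`:
it agrees with `f` on (the images of) old edges and takes the value `y` on the new
pendant edge. -/
noncomputable def extendLeaf {V : Type*} [Fintype V] [DecidableEq V]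
    (G : SimpleGraph V) [DecidableRel G.Adj] (v : V) (f : G.edgeSet → ℝ) (y : ℝ) :
    (addLeaves G v 1).edgeSet → ℝ := fun e =>
  if h : ∃ e₀ : G.edgeSet, Sym2.map Sum.inl (e₀ : Sym2 V) = (e : Sym2 (V ⊕ Fin 1))
  then f h.choose else y

section Aux
variable {V : Type*} [Fintype V] [DecidableEq V] (G : SimpleGraph V) [DecidableRel G.Adj] (v : V)

lemma AL.adj_inl_inl {x y : V} : (addLeaves G v 1).Adj (Sum.inl x) (Sum.inl y) ↔ G.Adj x y := Iff.rfl
lemma AL.adj_inl_inr {x : V} {i : Fin 1} : (addLeaves G v 1).Adj (Sum.inl x) (Sum.inr i) ↔ x = v := Iff.rfl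
lemma AL.adj_inr_inl {y : V} {i : Fin 1} : (addLeaves G v 1).Adj (Sum.inr i) (Sum.inl y) ↔ y = v := Iff.rfl
lemma AL.adj_inr_inr {i j : Fin 1} : ¬ (addLeaves G v 1).Adj (Sum.inr i) (Sum.inr j) := fun h => h

lemma AL.degree_eq (w : V ⊕ Fin 1) :
    (addLeaves G v 1).degree w = ∑ z : V ⊕ Fin 1, if (addLeaves G v 1).Adj w z then 1 else 0 := by
  rw [SimpleGraph.degree, neighborFinset_eq_filter, Finset.card_filter]

lemma AL.degree_inl (x : V) :
    (addLeaves G v 1).degree (Sum.inl x) = G.degree x + if x = v then 1 else 0 := by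
  rw [AL.degree_eq, Fintype.sum_sum_type]
  have h1 : (∑ a : V, if (addLeaves G v 1).Adj (Sum.inl x) (Sum.inl a) then 1 else 0) = G.degree x := by
    rw [SimpleGraph.degree, neighborFinset_eq_filter, Finset.card_filter]
    rfl
  have h2 : (∑ i : Fin 1, if (addLeaves G v 1).Adj (Sum.inl x) (Sum.inr i) then 1 else 0) = if x = v then 1 else 0 := by
    simp [AL.adj_inl_inr]
  rw [h1, h2]

lemma AL.degree_inr (i : Fin 1) : (addLeaves G v 1).degree (Sum.inr i) = 1 := by
  rw [AL.degree_eq, Fintype.sum_sum_type]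
  simp [AL.adj_inr_inl, AL.adj_inr_inr]

lemma AL.map_mem (e : Sym2 V) (he : e ∈ G.edgeSet) :
    Sym2.map Sum.inl e ∈ (addLeaves G v 1).edgeSet := by
  induction e using Sym2.ind with
  | _ x y => simpa [Sym2.map_pair_eq, SimpleGraph.mem_edgeSet, AL.adj_inl_inl] using he

noncomputable def AL.iota : G.edgeSet → (addLeaves G v 1).edgeSet :=
  fun e => ⟨Sym2.map Sum.inl (e : Sym2 V), AL.map_mem G v _ e.2⟩

noncomputable def AL.enew : (addLeaves G v 1).edgeSet :=
  ⟨s(Sum.inl v, Sum.inr 0), by simp [SimpleGraph.mem_edgeSet, AL.adj_inl_inr]⟩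

lemma AL.iota_injective : Function.Injective (AL.iota G v) := by
  intro e e' h
  exact Subtype.ext (Sym2.map.injective Sum.inl_injective (congrArg Subtype.val h))

lemma AL.inr_not_mem_iota (e : G.edgeSet) (i : Fin 1) :
    Sum.inr i ∉ ((AL.iota G v e : (addLeaves G v 1).edgeSet) : Sym2 (V ⊕ Fin 1)) := by
  simp [AL.iota, Sym2.mem_map]

lemma AL.iota_ne_enew (e : G.edgeSet) : AL.iota G v e ≠ AL.enew G v := by
  intro h
  have := AL.inr_not_mem_iota G v e 0
  rw [h] at this
  simp [AL.enew] at this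

lemma AL.mem_iota {w : V} {e : G.edgeSet} :
    (Sum.inl w : V ⊕ Fin 1) ∈ ((AL.iota G v e : (addLeaves G v 1).edgeSet) : Sym2 (V ⊕ Fin 1)) ↔ w ∈ (e : Sym2 V) := by
  simp [AL.iota, Sym2.mem_map]

noncomputable def AL.edgeEquiv : G.edgeSet ⊕ Fin 1 ≃ (addLeaves G v 1).edgeSet := by
  apply Equiv.ofBijective (Sum.elim (AL.iota G v) (fun _ => AL.enew G v))
  constructor
  · intro a b h
    match a, b with
    | Sum.inl e, Sum.inl e' => exact congrArg _ (AL.iota_injective G v h)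
    | Sum.inl e, Sum.inr i => exact absurd h (AL.iota_ne_enew G v e)
    | Sum.inr i, Sum.inl e => exact absurd h.symm (AL.iota_ne_enew G v e)
    | Sum.inr i, Sum.inr j => simp [Fin.eq_zero i, Fin.eq_zero j]
  · rintro ⟨s, hs⟩
    induction s using Sym2.ind with
    | _ a b =>
      match a, b with
      | Sum.inl a, Sum.inl b =>
        exact ⟨Sum.inl ⟨s(a, b), hs⟩, Subtype.ext (Sym2.map_pair_eq _ _ _)⟩
      | Sum.inl a, Sum.inr i =>
        refine ⟨Sum.inr 0, Subtype.ext ?_⟩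
        have ha : a = v := hs
        simp [AL.enew, ha, Fin.eq_zero i]
      | Sum.inr i, Sum.inl b =>
        refine ⟨Sum.inr 0, Subtype.ext ?_⟩
        have hb : b = v := hs
        simp [AL.enew, hb, Fin.eq_zero i, Sym2.eq_swap]
      | Sum.inr i, Sum.inr j => exact absurd hs (AL.adj_inr_inr G v (i := i) (j := j))

end Aux

section Aux2
variable {V : Type*} [Fintype V] [DecidableEq V] (G : SimpleGraph V) [DecidableRel G.Adj] (v : V)

lemma AL.extendLeaf_iota (f : G.edgeSet → ℝ) (y : ℝ) (e : G.edgeSet) :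
    extendLeaf G v f y (AL.iota G v e) = f e := by
  have h : ∃ e₀ : G.edgeSet, Sym2.map Sum.inl (e₀ : Sym2 V)
      = ((AL.iota G v e : (addLeaves G v 1).edgeSet) : Sym2 (V ⊕ Fin 1)) := ⟨e, rfl⟩
  rw [extendLeaf, dif_pos h]
  congr 1
  exact Subtype.ext (Sym2.map.injective Sum.inl_injective h.choose_spec)

lemma AL.extendLeaf_enew (f : G.edgeSet → ℝ) (y : ℝ) :
    extendLeaf G v f y (AL.enew G v) = y := by
  rw [extendLeaf, dif_neg]
  rintro ⟨e₀, he⟩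
  have : (Sum.inr 0 : V ⊕ Fin 1) ∈ Sym2.map Sum.inl (e₀ : Sym2 V) := by
    rw [he]; simp [AL.enew]
  simp [Sym2.mem_map] at this

lemma AL.degree_inl_real (x : V) :
    (((addLeaves G v 1).degree (Sum.inl x) : ℝ)) = (G.degree x : ℝ) + if x = v then 1 else 0 := by
  rw [AL.degree_inl]
  split_ifs <;> push_cast <;> ring

lemma AL.ricci_old (e e' : G.edgeSet) :
    ricciMatrix (addLeaves G v 1) (AL.iota G v e) (AL.iota G v e') =
      ricciMatrix G e e' + (if e = e' then (-1:ℝ) else 1) *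
        (if v ∈ (e : Sym2 V) ∧ v ∈ (e' : Sym2 V)
          then ((G.degree v : ℝ) + 1)⁻¹ - (G.degree v : ℝ)⁻¹ else 0) := by
  rw [ricciMatrix, ricciMatrix, Fintype.sum_sum_type]
  have hinr : (∑ i : Fin 1, if (Sum.inr i : V ⊕ Fin 1) ∈ ((AL.iota G v e : (addLeaves G v 1).edgeSet) : Sym2 (V ⊕ Fin 1)) ∧ (Sum.inr i : V ⊕ Fin 1) ∈ ((AL.iota G v e' : (addLeaves G v 1).edgeSet) : Sym2 (V ⊕ Fin 1)) then (((addLeaves G v 1).degree (Sum.inr i) : ℝ))⁻¹ else 0) = 0 := by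
    apply Finset.sum_eq_zero
    intro i _
    rw [if_neg]
    rintro ⟨h1, _⟩
    exact AL.inr_not_mem_iota G v e i h1
  have hiff : (AL.iota G v e = AL.iota G v e') ↔ e = e' := (AL.iota_injective G v).eq_iff
  rw [hinr, add_zero]
  have hsum : (∑ w : V, if (Sum.inl w : V ⊕ Fin 1) ∈ ((AL.iota G v e : (addLeaves G v 1).edgeSet) : Sym2 (V ⊕ Fin 1)) ∧ (Sum.inl w : V ⊕ Fin 1) ∈ ((AL.iota G v e' : (addLeaves G v 1).edgeSet) : Sym2 (V ⊕ Fin 1)) then (((addLeaves G v 1).degree (Sum.inl w) : ℝ))⁻¹ else 0)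
      = (∑ z : V, if z ∈ (e : Sym2 V) ∧ z ∈ (e' : Sym2 V) then ((G.degree z : ℝ))⁻¹ else 0)
        + (if v ∈ (e : Sym2 V) ∧ v ∈ (e' : Sym2 V)
            then ((G.degree v : ℝ) + 1)⁻¹ - (G.degree v : ℝ)⁻¹ else 0) := by
    have hv : (if v ∈ (e : Sym2 V) ∧ v ∈ (e' : Sym2 V)
          then ((G.degree v : ℝ) + 1)⁻¹ - (G.degree v : ℝ)⁻¹ else 0)
        = ∑ w : V, (if w = v then (if v ∈ (e : Sym2 V) ∧ v ∈ (e' : Sym2 V)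
            then ((G.degree v : ℝ) + 1)⁻¹ - (G.degree v : ℝ)⁻¹ else 0) else 0) := by
      rw [Finset.sum_ite_eq' Finset.univ v]
      simp
    rw [hv, ← Finset.sum_add_distrib]
    apply Finset.sum_congr rfl
    intro w _
    simp only [AL.mem_iota, AL.degree_inl_real]
    by_cases hw : w = v
    · subst hw
      simp only [if_pos rfl]
      split_ifs with h
      · ring
      · simp
    · simp [hw]
  rw [hsum]
  simp only [hiff]
  ring

lemma AL.mem_enew_iff (z : V ⊕ Fin 1) :
    z ∈ ((AL.enew G v : (addLeaves G v 1).edgeSet) : Sym2 (V ⊕ Fin 1)) ↔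
      z = Sum.inl v ∨ z = Sum.inr 0 := by
  simp [AL.enew]

lemma AL.ricci_cross (e : G.edgeSet) :
    ricciMatrix (addLeaves G v 1) (AL.iota G v e) (AL.enew G v) =
      if v ∈ (e : Sym2 V) then ((G.degree v : ℝ) + 1)⁻¹ else 0 := by
  rw [ricciMatrix, if_neg (AL.iota_ne_enew G v e), one_mul, Fintype.sum_sum_type]
  have hinr : (∑ i : Fin 1, if (Sum.inr i : V ⊕ Fin 1) ∈ ((AL.iota G v e : (addLeaves G v 1).edgeSet) : Sym2 (V ⊕ Fin 1)) ∧ (Sum.inr i : V ⊕ Fin 1) ∈ ((AL.enew G v : (addLeaves G v 1).edgeSet) : Sym2 (V ⊕ Fin 1)) then (((addLeaves G v 1).degree (Sum.inr i) : ℝ))⁻¹ else 0) = 0 := by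
    apply Finset.sum_eq_zero
    intro i _
    rw [if_neg]
    rintro ⟨h1, _⟩
    exact AL.inr_not_mem_iota G v e i h1
  rw [hinr, add_zero]
  have hpt : ∀ w : V, (if (Sum.inl w : V ⊕ Fin 1) ∈ ((AL.iota G v e : (addLeaves G v 1).edgeSet) : Sym2 (V ⊕ Fin 1)) ∧ (Sum.inl w : V ⊕ Fin 1) ∈ ((AL.enew G v : (addLeaves G v 1).edgeSet) : Sym2 (V ⊕ Fin 1)) then (((addLeaves G v 1).degree (Sum.inl w) : ℝ))⁻¹ else 0)
      = (if w = v then (if v ∈ (e : Sym2 V) then ((G.degree v : ℝ) + 1)⁻¹ else 0) else 0) := by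
    intro w
    simp only [AL.mem_iota, AL.mem_enew_iff, AL.degree_inl_real]
    by_cases hw : w = v
    · subst hw
      by_cases he : w ∈ (e : Sym2 V) <;> simp [he]
    · simp [hw]
  rw [Finset.sum_congr rfl (fun w _ => hpt w), Finset.sum_ite_eq' Finset.univ v]
  simp

lemma AL.ricci_cross' (e : G.edgeSet) :
    ricciMatrix (addLeaves G v 1) (AL.enew G v) (AL.iota G v e) =
      if v ∈ (e : Sym2 V) then ((G.degree v : ℝ) + 1)⁻¹ else 0 := by
  rw [← AL.ricci_cross G v e, ricciMatrix, ricciMatrix]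
  have h1 : (AL.enew G v = AL.iota G v e) ↔ (AL.iota G v e = AL.enew G v) := eq_comm
  have h2 : ∀ z : V ⊕ Fin 1, (z ∈ ((AL.enew G v : (addLeaves G v 1).edgeSet) : Sym2 (V ⊕ Fin 1)) ∧ z ∈ ((AL.iota G v e : (addLeaves G v 1).edgeSet) : Sym2 (V ⊕ Fin 1))) ↔ (z ∈ ((AL.iota G v e : (addLeaves G v 1).edgeSet) : Sym2 (V ⊕ Fin 1)) ∧ z ∈ ((AL.enew G v : (addLeaves G v 1).edgeSet) : Sym2 (V ⊕ Fin 1))) := fun z => and_comm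
  simp only [h1, h2]

lemma AL.ricci_new :
    ricciMatrix (addLeaves G v 1) (AL.enew G v) (AL.enew G v) =
      -(((G.degree v : ℝ) + 1)⁻¹ + 1) := by
  rw [ricciMatrix, if_pos rfl, Fintype.sum_sum_type]
  have hinl : (∑ w : V, if (Sum.inl w : V ⊕ Fin 1) ∈ ((AL.enew G v : (addLeaves G v 1).edgeSet) : Sym2 (V ⊕ Fin 1)) ∧ (Sum.inl w : V ⊕ Fin 1) ∈ ((AL.enew G v : (addLeaves G v 1).edgeSet) : Sym2 (V ⊕ Fin 1)) then (((addLeaves G v 1).degree (Sum.inl w) : ℝ))⁻¹ else 0)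
      = ((G.degree v : ℝ) + 1)⁻¹ := by
    have hpt : ∀ w : V, (if (Sum.inl w : V ⊕ Fin 1) ∈ ((AL.enew G v : (addLeaves G v 1).edgeSet) : Sym2 (V ⊕ Fin 1)) ∧ (Sum.inl w : V ⊕ Fin 1) ∈ ((AL.enew G v : (addLeaves G v 1).edgeSet) : Sym2 (V ⊕ Fin 1)) then (((addLeaves G v 1).degree (Sum.inl w) : ℝ))⁻¹ else 0)
        = (if w = v then ((G.degree v : ℝ) + 1)⁻¹ else 0) := by
      intro w
      simp only [AL.mem_enew_iff, AL.degree_inl_real]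
      by_cases hw : w = v
      · subst hw; simp
      · simp [hw]
    rw [Finset.sum_congr rfl (fun w _ => hpt w), Finset.sum_ite_eq' Finset.univ v]
    simp
  have hinr : (∑ i : Fin 1, if (Sum.inr i : V ⊕ Fin 1) ∈ ((AL.enew G v : (addLeaves G v 1).edgeSet) : Sym2 (V ⊕ Fin 1)) ∧ (Sum.inr i : V ⊕ Fin 1) ∈ ((AL.enew G v : (addLeaves G v 1).edgeSet) : Sym2 (V ⊕ Fin 1)) then (((addLeaves G v 1).degree (Sum.inr i) : ℝ))⁻¹ else 0) = 1 := by
    rw [Fin.sum_univ_one]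
    rw [if_pos]
    · rw [AL.degree_inr]; norm_num
    · constructor <;> simp [AL.mem_enew_iff]
  rw [hinl, hinr]
  ring


lemma AL.key_comb (f : G.edgeSet → ℝ) (c : ℝ) :
    (∑ e : G.edgeSet, ∑ e' : G.edgeSet,
      f e * (((if e = e' then (-1:ℝ) else 1) *
        (if v ∈ (e : Sym2 V) ∧ v ∈ (e' : Sym2 V) then c else 0)) * f e'))
    = ((∑ e : G.edgeSet, if v ∈ (e : Sym2 V) then f e else 0) ^ 2
        - 2 * (∑ e : G.edgeSet, if v ∈ (e : Sym2 V) then (f e) ^ 2 else 0)) * c := by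
  have hpt : ∀ e e' : G.edgeSet,
      f e * (((if e = e' then (-1:ℝ) else 1) *
        (if v ∈ (e : Sym2 V) ∧ v ∈ (e' : Sym2 V) then c else 0)) * f e')
      = (if v ∈ (e : Sym2 V) then f e else 0) * ((if v ∈ (e' : Sym2 V) then f e' else 0) * c)
        - (if e = e' then 2 * ((if v ∈ (e' : Sym2 V) then (f e') ^ 2 else 0) * c) else 0) := by
    intro e e'
    by_cases hee : e = e'
    · subst hee
      split_ifs <;> first | ring1 | simp_all
    · split_ifs <;> first | ring1 | simp_all
  simp only [hpt]
  rw [Finset.sum_congr rfl (fun e _ => Finset.sum_sub_distrib _ _), Finset.sum_sub_distrib]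
  have h1 : (∑ e : G.edgeSet, ∑ e' : G.edgeSet,
      (if v ∈ (e : Sym2 V) then f e else 0) * ((if v ∈ (e' : Sym2 V) then f e' else 0) * c))
      = (∑ e : G.edgeSet, if v ∈ (e : Sym2 V) then f e else 0) *
          ((∑ e : G.edgeSet, if v ∈ (e : Sym2 V) then f e else 0) * c) := by
    rw [Finset.sum_mul]
    apply Finset.sum_congr rfl
    intro e _
    rw [← Finset.mul_sum, ← Finset.sum_mul]
  have h2 : (∑ e : G.edgeSet, ∑ e' : G.edgeSet,
      (if e = e' then 2 * ((if v ∈ (e' : Sym2 V) then (f e') ^ 2 else 0) * c) else 0))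
      = 2 * ((∑ e : G.edgeSet, if v ∈ (e : Sym2 V) then (f e) ^ 2 else 0) * c) := by
    rw [Finset.sum_congr rfl (fun e _ => Finset.sum_ite_eq Finset.univ e
      (fun e' : G.edgeSet => 2 * ((if v ∈ (e' : Sym2 V) then (f e') ^ 2 else 0) * c)))]
    simp only [Finset.mem_univ, if_pos]
    rw [Finset.sum_mul, Finset.mul_sum]
  rw [h1, h2]
  ring

lemma AL.norm_ext (f : G.edgeSet → ℝ) (y : ℝ) :
    (extendLeaf G v f y) ⬝ᵥ (extendLeaf G v f y) = f ⬝ᵥ f + y ^ 2 := by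
  simp only [dotProduct]
  rw [← Equiv.sum_comp (AL.edgeEquiv G v)
    (fun E => extendLeaf G v f y E * extendLeaf G v f y E), Fintype.sum_sum_type,
    Fin.sum_univ_one]
  have h1 : ∀ e : G.edgeSet, AL.edgeEquiv G v (Sum.inl e) = AL.iota G v e := fun _ => rfl
  have h2 : AL.edgeEquiv G v (Sum.inr 0) = AL.enew G v := rfl
  simp only [h1, h2, AL.extendLeaf_iota, AL.extendLeaf_enew]
  ring

lemma AL.quad_ext (f : G.edgeSet → ℝ) (y : ℝ) :
    (extendLeaf G v f y) ⬝ᵥ (ricciMatrix (addLeaves G v 1)).mulVec (extendLeaf G v f y)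
      = f ⬝ᵥ (ricciMatrix G).mulVec f
        + ((∑ e : G.edgeSet, if v ∈ (e : Sym2 V) then f e else 0) ^ 2
            - 2 * (∑ e : G.edgeSet, if v ∈ (e : Sym2 V) then (f e) ^ 2 else 0))
          * (((G.degree v : ℝ) + 1)⁻¹ - (G.degree v : ℝ)⁻¹)
        + 2 * y * (∑ e : G.edgeSet, if v ∈ (e : Sym2 V) then f e else 0)
            * ((G.degree v : ℝ) + 1)⁻¹
        - y ^ 2 * (((G.degree v : ℝ) + 1)⁻¹ + 1) := by
  simp only [dotProduct, Matrix.mulVec]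
  rw [← Equiv.sum_comp (AL.edgeEquiv G v)
    (fun E => extendLeaf G v f y E *
      ∑ E' : (addLeaves G v 1).edgeSet,
        ricciMatrix (addLeaves G v 1) E E' * extendLeaf G v f y E')]
  rw [Finset.sum_congr rfl (fun a _ => by
    rw [← Equiv.sum_comp (AL.edgeEquiv G v)
      (fun E' => ricciMatrix (addLeaves G v 1) (AL.edgeEquiv G v a) E' *
        extendLeaf G v f y E')])]
  rw [Fintype.sum_sum_type, Fin.sum_univ_one]
  have h1 : ∀ e : G.edgeSet, AL.edgeEquiv G v (Sum.inl e) = AL.iota G v e := fun _ => rfl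
  have h2 : AL.edgeEquiv G v (Sum.inr 0) = AL.enew G v := rfl
  simp only [Fintype.sum_sum_type, Fin.sum_univ_one, h1, h2, AL.extendLeaf_iota,
    AL.extendLeaf_enew, AL.ricci_old, AL.ricci_cross, AL.ricci_cross', AL.ricci_new]
  simp only [add_mul, Finset.sum_add_distrib, mul_add]
  have hmulsum : ∀ x : G.edgeSet,
      f x * (∑ x1 : G.edgeSet, ((if x = x1 then (-1:ℝ) else 1) *
        (if v ∈ (x : Sym2 V) ∧ v ∈ (x1 : Sym2 V)
          then ((G.degree v : ℝ) + 1)⁻¹ - (G.degree v : ℝ)⁻¹ else 0)) * f x1)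
      = ∑ x1 : G.edgeSet, f x * (((if x = x1 then (-1:ℝ) else 1) *
        (if v ∈ (x : Sym2 V) ∧ v ∈ (x1 : Sym2 V)
          then ((G.degree v : ℝ) + 1)⁻¹ - (G.degree v : ℝ)⁻¹ else 0)) * f x1) := by
    intro x
    rw [Finset.mul_sum]
  rw [Finset.sum_congr rfl (fun x _ => hmulsum x),
    AL.key_comb G v f (((G.degree v : ℝ) + 1)⁻¹ - (G.degree v : ℝ)⁻¹)]
  have h3 : (∑ x : G.edgeSet, f x * ((if v ∈ (x : Sym2 V) then ((G.degree v : ℝ) + 1)⁻¹ else 0) * y))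
      = (∑ x : G.edgeSet, if v ∈ (x : Sym2 V) then f x else 0) * (((G.degree v : ℝ) + 1)⁻¹ * y) := by
    rw [Finset.sum_mul]
    apply Finset.sum_congr rfl
    intro x _
    split_ifs <;> ring1
  have h4 : (∑ x : G.edgeSet, (if v ∈ (x : Sym2 V) then ((G.degree v : ℝ) + 1)⁻¹ else 0) * f x)
      = (∑ x : G.edgeSet, if v ∈ (x : Sym2 V) then f x else 0) * ((G.degree v : ℝ) + 1)⁻¹ := by
    rw [Finset.sum_mul]
    apply Finset.sum_congr rfl
    intro x _
    split_ifs <;> ring1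
  rw [h3, h4]
  ring
end Aux2

lemma AL.arith (μ S A D : ℝ) (hD : 0 < D) (hA : 0 < A) (hmu : -1 ≤ μ)
    (hcrit : S ^ 2 / A * (2 + μ * (D + 1)) ≤ 2 * (D + 2 + μ * (D + 1))) :
    μ ≤ (μ + (S ^ 2 - 2 * A) * ((D + 1)⁻¹ - D⁻¹)
          + 2 * (S / (D + 2 + μ * (D + 1))) * S * (D + 1)⁻¹
          - (S / (D + 2 + μ * (D + 1))) ^ 2 * ((D + 1)⁻¹ + 1)) /
        (1 + (S / (D + 2 + μ * (D + 1))) ^ 2) := by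
  set K := D + 2 + μ * (D + 1) with hK
  have hKpos : (0:ℝ) < K := by
    nlinarith [mul_nonneg (by linarith : (0:ℝ) ≤ 1 + μ) (by linarith : (0:ℝ) ≤ D + 1)]
  have hA0 : A ≠ 0 := hA.ne'
  have h'' := mul_le_mul_of_nonneg_right hcrit hA.le
  have h' : S ^ 2 * (2 + μ * (D + 1)) ≤ 2 * K * A := by
    calc S ^ 2 * (2 + μ * (D + 1)) = S ^ 2 / A * (2 + μ * (D + 1)) * A := by
          field_simp
      _ ≤ 2 * K * A := by linarith [h'']
  rw [le_div_iff₀ (by positivity)]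
  have key : μ + (S ^ 2 - 2 * A) * ((D + 1)⁻¹ - D⁻¹) + 2 * (S / K) * S * (D + 1)⁻¹
        - (S / K) ^ 2 * ((D + 1)⁻¹ + 1) - μ * (1 + (S / K) ^ 2)
      = (2 * K * A - S ^ 2 * (2 + μ * (D + 1))) / (D * (D + 1) * K) := by
    rw [hK]
    have hK0 : D + 2 + μ * (D + 1) ≠ 0 := hKpos.ne'
    have hD0 : D ≠ 0 := hD.ne'
    have hD1 : D + 1 ≠ 0 := by positivity
    field_simp
    ring
  have hnn : (0:ℝ) ≤ (2 * K * A - S ^ 2 * (2 + μ * (D + 1))) / (D * (D + 1) * K) :=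
    div_nonneg (by linarith) (by positivity)
  linarith [key, hnn]

section AuxAdj
variable {V : Type*} [Fintype V] [DecidableEq V] (G : SimpleGraph V) [DecidableRel G.Adj] (v : V)

lemma AL.exists_adj_of_mem (s : Sym2 V) (hs : s ∈ G.edgeSet) (hv : v ∈ s) :
    ∃ w, G.Adj v w := by
  induction s using Sym2.ind with
  | _ a b =>
    rw [SimpleGraph.mem_edgeSet] at hs
    rcases Sym2.mem_iff.mp hv with rfl | rfl
    · exact ⟨b, hs⟩
    · exact ⟨a, hs.symm⟩

end AuxAdj

/-- ρ_v-sharp criterion: if `f` is a unit vector on `T` with `μ = ⟨f, R_T f⟩ ≥ -1`,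
`A_v(f) > 0`, `ρ_v = S_v(f)²/A_v(f)`, and `2(d+2+μ(d+1)) ≥ ρ_v(2+μ(d+1))`, then some
extension `f_y` to the tree `T'` (obtained by attaching one pendant edge at `v`)
satisfies `⟨f_y, R_{T'} f_y⟩/⟨f_y, f_y⟩ ≥ μ`. -/
theorem rho_sharp_criterion {V : Type*} [Fintype V] [DecidableEq V]
    (G : SimpleGraph V) [DecidableRel G.Adj]
    (hT : G.IsTree) (h1 : 1 ≤ G.edgeFinset.card) (v : V) (f : G.edgeSet → ℝ)
    (hunit : f ⬝ᵥ f = 1)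
    (hA : 0 < ∑ e : G.edgeSet, if v ∈ (e : Sym2 V) then (f e) ^ 2 else 0)
    (hmu : -1 ≤ f ⬝ᵥ (ricciMatrix G).mulVec f)
    (hcrit :
      (∑ e : G.edgeSet, if v ∈ (e : Sym2 V) then f e else 0) ^ 2 /
          (∑ e : G.edgeSet, if v ∈ (e : Sym2 V) then (f e) ^ 2 else 0) *
          (2 + (f ⬝ᵥ (ricciMatrix G).mulVec f) * ((G.degree v : ℝ) + 1)) ≤
        2 * ((G.degree v : ℝ) + 2 +
          (f ⬝ᵥ (ricciMatrix G).mulVec f) * ((G.degree v : ℝ) + 1))) :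
    ∃ y : ℝ,
      f ⬝ᵥ (ricciMatrix G).mulVec f ≤
        ((extendLeaf G v f y) ⬝ᵥ
            (ricciMatrix (addLeaves G v 1)).mulVec (extendLeaf G v f y)) /
          ((extendLeaf G v f y) ⬝ᵥ (extendLeaf G v f y)) := by
  obtain ⟨e0, -, he0⟩ := Finset.exists_ne_zero_of_sum_ne_zero hA.ne'
  have hv0 : v ∈ (e0 : Sym2 V) := by
    by_contra hv
    exact he0 (if_neg hv)
  have hdeg : 0 < G.degree v :=
    (SimpleGraph.degree_pos_iff_exists_adj G v).mpr (AL.exists_adj_of_mem G v e0 e0.2 hv0)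
  have hD : (0:ℝ) < (G.degree v : ℝ) := by exact_mod_cast hdeg
  refine ⟨(∑ e : G.edgeSet, if v ∈ (e : Sym2 V) then f e else 0) /
    ((G.degree v : ℝ) + 2 + (f ⬝ᵥ (ricciMatrix G).mulVec f) * ((G.degree v : ℝ) + 1)), ?_⟩
  rw [AL.quad_ext, AL.norm_ext, hunit]
  exact AL.arith _ _ _ _ hD hA hmu hcrit
end

section
/- Let T be a finite tree with at least one edge and v a vertex of T with degree d_T(v) ≤ 2. Let T' be the tree obtained from T by attaching one new pendant edge at v. Then λ_max(R_{T'}) ≥ λ_max(R_T). -/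
open SimpleGraph Matrix Finset

set_option linter.unusedSectionVars false
set_option linter.unnecessarySeqFocus false





section Spectral
variable {n : Type*} [Fintype n] [DecidableEq n] [Nonempty n]

lemma lambdaMax_spec (M : Matrix n n ℝ) (hM : M.IsSymm) :
    (∃ f : n → ℝ, f ≠ 0 ∧ M.mulVec f = lambdaMax M • f) ∧
    (∀ g : n → ℝ, g ≠ 0 → dotProduct g (M.mulVec g) ≤ lambdaMax M * dotProduct g g) := by
  classical
  set T : EuclideanSpace ℝ n →ₗ[ℝ] EuclideanSpace ℝ n := Matrix.toEuclideanLin M with hT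
  have hsym : T.IsSymmetric := by
    rw [← Matrix.isHermitian_iff_isSymmetric]
    rwa [Matrix.IsHermitian, Matrix.conjTranspose_eq_transpose_of_trivial]
  set μ : ℝ := ⨆ x : { x : EuclideanSpace ℝ n // x ≠ 0 }, RCLike.re (inner ℝ (T x) (x : EuclideanSpace ℝ n) : ℝ) / ‖(x : EuclideanSpace ℝ n)‖ ^ 2 with hμ
  have hev : Module.End.HasEigenvalue T (μ : ℝ) :=
    hsym.hasEigenvalue_iSup_of_finiteDimensional
  -- an eigenvector for μ
  obtain ⟨x₀, hx₀mem, hx₀ne⟩ := hev.exists_hasEigenvector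
  have hTx₀ : M.mulVec x₀ = μ • x₀ := by
    have h := congrArg WithLp.ofLp (Module.End.mem_eigenspace_iff.mp hx₀mem)
    simpa [hT] using h
  -- inner products are dot products
  have hinner : ∀ y : EuclideanSpace ℝ n, (inner ℝ (T y) (y : EuclideanSpace ℝ n) : ℝ) = dotProduct y (M.mulVec y) := by
    intro y
    rw [dotProduct_comm]
    simp only [hT, PiLp.inner_apply, dotProduct, RCLike.inner_apply, starRingEnd_apply,
      star_trivial]
    simp [mul_comm]
  have hnormsq : ∀ y : EuclideanSpace ℝ n, ‖y‖ ^ 2 = dotProduct y y := by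
    intro y
    rw [EuclideanSpace.norm_sq_eq]
    simp [dotProduct, sq]
  -- Rayleigh quotients are bounded
  set T' : EuclideanSpace ℝ n →L[ℝ] EuclideanSpace ℝ n := LinearMap.toContinuousLinearMap T with hT'
  have hbdd : BddAbove (Set.range fun x : { x : EuclideanSpace ℝ n // x ≠ 0 } =>
      RCLike.re (inner ℝ (T x) (x : EuclideanSpace ℝ n) : ℝ) / ‖(x : EuclideanSpace ℝ n)‖ ^ 2) := by
    refine ⟨‖T'‖, ?_⟩
    rintro r ⟨⟨y, hy⟩, rfl⟩
    have hylt : (0:ℝ) < ‖y‖ := norm_pos_iff.mpr hy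
    have h1 : (inner ℝ (T y) (y : EuclideanSpace ℝ n) : ℝ) ≤ ‖T'‖ * ‖y‖ ^ 2 := by
      calc (inner ℝ (T y) (y : EuclideanSpace ℝ n) : ℝ) ≤ ‖(inner ℝ (T y) (y : EuclideanSpace ℝ n) : ℝ)‖ := le_abs_self _
        _ ≤ ‖T y‖ * ‖y‖ := norm_inner_le_norm _ _
        _ ≤ ‖T'‖ * ‖y‖ * ‖y‖ := by
            have h2 : T' y = T y := rfl
            rw [← h2]
            exact mul_le_mul_of_nonneg_right (T'.le_opNorm y) (norm_nonneg y)
        _ = ‖T'‖ * ‖y‖ ^ 2 := by ring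
    simp only [RCLike.re_to_real]
    rw [div_le_iff₀ (by positivity)]
    simpa using h1
  -- every Rayleigh quotient is at most μ
  have hray : ∀ y : EuclideanSpace ℝ n, y ≠ 0 → dotProduct y (M.mulVec y) ≤ μ * dotProduct y y := by
    intro y hy
    have := le_ciSup hbdd ⟨y, hy⟩
    simp only [RCLike.re_to_real] at this
    rw [hinner, hnormsq] at this
    have hpos : (0:ℝ) < dotProduct y y := by
      rw [← hnormsq]
      have : ‖y‖ ≠ 0 := norm_ne_zero_iff.mpr hy
      positivity
    calc dotProduct y (M.mulVec y) = (dotProduct y (M.mulVec y) / dotProduct y y) * dotProduct y y := by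
          field_simp
      _ ≤ μ * dotProduct y y := by
          apply mul_le_mul_of_nonneg_right _ hpos.le
          exact this
  -- every eigenvalue is at most μ
  have hall : ∀ ν ∈ {ν : ℝ | ∃ x : n → ℝ, x ≠ 0 ∧ M.mulVec x = ν • x}, ν ≤ μ := by
    rintro ν ⟨y, hy, hνy⟩
    have hpos : (0:ℝ) < dotProduct y y := by
      have h := hnormsq (WithLp.toLp 2 y)
      rw [← h]
      have : ‖(WithLp.toLp 2 y : EuclideanSpace ℝ n)‖ ≠ 0 := norm_ne_zero_iff.mpr (by simpa using hy)
      positivity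
    have h1 : dotProduct y (M.mulVec y) = ν * dotProduct y y := by
      rw [hνy, dotProduct_smul]; rfl
    have h2 := hray (WithLp.toLp 2 y) (by simpa using hy)
    rw [h1] at h2
    exact le_of_mul_le_mul_right h2 hpos
  have hgreatest : IsGreatest {ν : ℝ | ∃ x : n → ℝ, x ≠ 0 ∧ M.mulVec x = ν • x} μ := by
    constructor
    · exact ⟨x₀, by simpa using hx₀ne, hTx₀⟩
    · exact hall
  have hlam : lambdaMax M = μ := hgreatest.csSup_eq
  refine ⟨⟨x₀, by simpa using hx₀ne, by rw [hlam]; exact hTx₀⟩, ?_⟩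
  intro g hg
  rw [hlam]
  exact hray (WithLp.toLp 2 g) (by simpa using hg)

end Spectral


section Quad
variable {W : Type*} [Fintype W] [DecidableEq W] (H : SimpleGraph W) [DecidableRel H.Adj]

lemma ricci_isSymm : (ricciMatrix H).IsSymm := by
  ext e e'
  simp only [Matrix.transpose_apply, ricciMatrix]
  by_cases h : e = e'
  · subst h; rfl
  · rw [if_neg h, if_neg fun he => h he.symm]
    congr 1
    exact Finset.sum_congr rfl fun z _ => if_congr and_comm rfl rfl

lemma ricci_quad (x : H.edgeSet → ℝ) :
    dotProduct x ((ricciMatrix H).mulVec x)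
      = ∑ z : W, ((H.degree z : ℝ))⁻¹ *
          ((∑ e : H.edgeSet, if z ∈ (e : Sym2 W) then x e else 0) ^ 2
            - 2 * ∑ e : H.edgeSet, if z ∈ (e : Sym2 W) then x e ^ 2 else 0) := by
  classical
  have key : ∀ e e' : H.edgeSet, x e * (ricciMatrix H e e' * x e')
      = ∑ z : W, (((H.degree z : ℝ))⁻¹ *
          ((if z ∈ (e : Sym2 W) then x e else 0) * (if z ∈ (e' : Sym2 W) then x e' else 0))
        - if e = e' then 2 * ((H.degree z : ℝ))⁻¹ * (if z ∈ (e : Sym2 W) then x e ^ 2 else 0)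
          else 0) := by
    intro e e'
    simp only [ricciMatrix, Finset.mul_sum, Finset.sum_mul]
    apply Finset.sum_congr rfl
    intro z _
    by_cases h : e = e'
    · subst h
      by_cases hz : z ∈ (e : Sym2 W) <;> simp [hz] <;> ring
    · by_cases hz : z ∈ (e : Sym2 W) <;> by_cases hz' : z ∈ (e' : Sym2 W) <;>
        simp [h, hz, hz'] <;> ring
  calc dotProduct x ((ricciMatrix H).mulVec x)
      = ∑ e : H.edgeSet, ∑ e' : H.edgeSet, x e * (ricciMatrix H e e' * x e') := by
        simp only [dotProduct, Matrix.mulVec, Finset.mul_sum]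
    _ = ∑ e : H.edgeSet, ∑ e' : H.edgeSet, ∑ z : W, (((H.degree z : ℝ))⁻¹ *
          ((if z ∈ (e : Sym2 W) then x e else 0) * (if z ∈ (e' : Sym2 W) then x e' else 0))
        - if e = e' then 2 * ((H.degree z : ℝ))⁻¹ * (if z ∈ (e : Sym2 W) then x e ^ 2 else 0)
          else 0) := by
        exact Finset.sum_congr rfl fun e _ => Finset.sum_congr rfl fun e' _ => key e e'
    _ = ∑ z : W, ∑ e : H.edgeSet, ∑ e' : H.edgeSet, (((H.degree z : ℝ))⁻¹ *
          ((if z ∈ (e : Sym2 W) then x e else 0) * (if z ∈ (e' : Sym2 W) then x e' else 0))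
        - if e = e' then 2 * ((H.degree z : ℝ))⁻¹ * (if z ∈ (e : Sym2 W) then x e ^ 2 else 0)
          else 0) := by
        rw [show (∑ e : H.edgeSet, ∑ e' : H.edgeSet, ∑ z : W, (((H.degree z : ℝ))⁻¹ *
          ((if z ∈ (e : Sym2 W) then x e else 0) * (if z ∈ (e' : Sym2 W) then x e' else 0))
        - if e = e' then 2 * ((H.degree z : ℝ))⁻¹ * (if z ∈ (e : Sym2 W) then x e ^ 2 else 0)
          else 0)) = ∑ e : H.edgeSet, ∑ z : W, ∑ e' : H.edgeSet, (((H.degree z : ℝ))⁻¹ *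
          ((if z ∈ (e : Sym2 W) then x e else 0) * (if z ∈ (e' : Sym2 W) then x e' else 0))
        - if e = e' then 2 * ((H.degree z : ℝ))⁻¹ * (if z ∈ (e : Sym2 W) then x e ^ 2 else 0)
          else 0) from Finset.sum_congr rfl fun e _ => Finset.sum_comm, Finset.sum_comm]
    _ = ∑ z : W, ((H.degree z : ℝ))⁻¹ *
          ((∑ e : H.edgeSet, if z ∈ (e : Sym2 W) then x e else 0) ^ 2
            - 2 * ∑ e : H.edgeSet, if z ∈ (e : Sym2 W) then x e ^ 2 else 0) := by
        apply Finset.sum_congr rfl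
        intro z _
        simp only [Finset.sum_sub_distrib]
        simp only [Finset.sum_ite_eq, Finset.mem_univ, if_true]
        rw [mul_sub]
        congr 1
        · rw [sq, Finset.sum_mul_sum, Finset.mul_sum]
          refine Finset.sum_congr rfl fun e _ => ?_
          rw [Finset.mul_sum]
        · rw [Finset.mul_sum, Finset.mul_sum]
          exact Finset.sum_congr rfl fun e _ => by ring

end Quad

section Main
variable {V : Type*} [Fintype V] [DecidableEq V] (G : SimpleGraph V) [DecidableRel G.Adj] (v : V)

lemma addLeaves_adj_inl_inl (x y : V) :
    (addLeaves G v 1).Adj (Sum.inl x) (Sum.inl y) ↔ G.Adj x y := Iff.rfl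

def ιe (e : G.edgeSet) : (addLeaves G v 1).edgeSet :=
  ⟨Sym2.map Sum.inl (e : Sym2 V), by
    obtain ⟨e, he⟩ := e
    induction e with
    | h a b =>
      rw [Sym2.map_pair_eq]
      exact (SimpleGraph.mem_edgeSet _).mpr ((SimpleGraph.mem_edgeSet _).mp he)⟩

def estar : (addLeaves G v 1).edgeSet :=
  ⟨s(Sum.inl v, Sum.inr 0), (SimpleGraph.mem_edgeSet _).mpr rfl⟩

lemma ιe_injective : Function.Injective (ιe G v) := by
  intro a b hab
  have := Subtype.ext_iff.mp hab
  exact Subtype.ext (Sym2.map.injective Sum.inl_injective this)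

lemma extendLeaf_ιe (f : G.edgeSet → ℝ) (y : ℝ) (e : G.edgeSet) :
    extendLeaf G v f y (ιe G v e) = f e := by
  have h : ∃ e₀ : G.edgeSet, Sym2.map Sum.inl (e₀ : Sym2 V) = ((ιe G v e) : Sym2 (V ⊕ Fin 1)) :=
    ⟨e, rfl⟩
  rw [extendLeaf, dif_pos h]
  congr 1
  have := h.choose_spec
  exact ιe_injective G v (Subtype.ext this)

lemma inr_not_mem_map (e : Sym2 V) (j : Fin 1) : Sum.inr j ∉ Sym2.map Sum.inl e := by
  intro hmem
  obtain ⟨w, _, hw⟩ := Sym2.mem_map.mp hmem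
  exact Sum.inl_ne_inr hw

lemma extendLeaf_estar (f : G.edgeSet → ℝ) (y : ℝ) :
    extendLeaf G v f y (estar G v) = y := by
  rw [extendLeaf, dif_neg]
  rintro ⟨e₀, he₀⟩
  have : (Sum.inr 0 : V ⊕ Fin 1) ∈ Sym2.map Sum.inl (e₀ : Sym2 V) := by
    rw [he₀]; simp [estar]
  exact inr_not_mem_map _ _ this

lemma elim_bijective :
    Function.Bijective (Sum.elim (ιe G v) (fun _ : Fin 1 => estar G v)) := by
  constructor
  · rintro (a | i) (b | j) hab
    · exact congrArg Sum.inl (ιe_injective G v hab)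
    · exfalso
      have : (Sum.inr (0:Fin 1) : V ⊕ Fin 1) ∈ ((ιe G v a) : Sym2 (V ⊕ Fin 1)) := by
        rw [show ((ιe G v a) : Sym2 (V ⊕ Fin 1)) = ((estar G v) : Sym2 (V ⊕ Fin 1)) from
          Subtype.ext_iff.mp hab]
        simp [estar]
      exact inr_not_mem_map _ _ this
    · exfalso
      have : (Sum.inr (0:Fin 1) : V ⊕ Fin 1) ∈ ((ιe G v b) : Sym2 (V ⊕ Fin 1)) := by
        rw [show ((ιe G v b) : Sym2 (V ⊕ Fin 1)) = ((estar G v) : Sym2 (V ⊕ Fin 1)) from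
          (Subtype.ext_iff.mp hab).symm]
        simp [estar]
      exact inr_not_mem_map _ _ this
    · simp [Subsingleton.elim i j]
  · rintro ⟨e, he⟩
    induction e with
    | h a b =>
      match a, b with
      | Sum.inl x, Sum.inl y =>
        refine ⟨Sum.inl ⟨s(x, y), ?_⟩, ?_⟩
        · exact (SimpleGraph.mem_edgeSet _).mpr ((SimpleGraph.mem_edgeSet _).mp he)
        · simp only [Sum.elim_inl, ιe]
          exact Subtype.ext (by simp [Sym2.map_pair_eq])
      | Sum.inl x, Sum.inr j =>
        have hx : x = v := (SimpleGraph.mem_edgeSet _).mp he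
        refine ⟨Sum.inr 0, ?_⟩
        simp only [Sum.elim_inr, estar]
        refine Subtype.ext ?_
        obtain rfl : j = 0 := Subsingleton.elim _ _
        subst hx
        rfl
      | Sum.inr j, Sum.inl y =>
        have hy : y = v := (SimpleGraph.mem_edgeSet _).mp he
        refine ⟨Sum.inr 0, ?_⟩
        simp only [Sum.elim_inr, estar]
        refine Subtype.ext ?_
        obtain rfl : j = 0 := Subsingleton.elim _ _
        subst hy
        exact Sym2.eq_swap
      | Sum.inr i, Sum.inr j =>
        exact absurd ((SimpleGraph.mem_edgeSet _).mp he) (by simp [addLeaves, addLeavesAdj])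

lemma sum_edges_addLeaves (F : (addLeaves G v 1).edgeSet → ℝ) :
    ∑ e' : (addLeaves G v 1).edgeSet, F e'
      = (∑ e : G.edgeSet, F (ιe G v e)) + F (estar G v) := by
  rw [← Fintype.sum_bijective _ (elim_bijective G v) _ F (fun x => rfl)]
  rw [Fintype.sum_sum_type]
  simp

end Main
section Deg
variable {W : Type*} [Fintype W] [DecidableEq W] (H : SimpleGraph W) [DecidableRel H.Adj]

lemma degree_eq_sum (z : W) : H.degree z = ∑ u : W, if H.Adj z u then 1 else 0 := by
  rw [← SimpleGraph.card_neighborFinset_eq_degree, neighborFinset_eq_filter, Finset.card_filter]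

lemma sum_ind_eq_degree (z : W) :
    ∑ e : H.edgeSet, (if z ∈ (e : Sym2 W) then (1:ℝ) else 0) = H.degree z := by
  rw [← Finset.sum_subtype H.edgeFinset (fun x => SimpleGraph.mem_edgeFinset)
    (fun e => if z ∈ e then (1:ℝ) else 0)]
  rw [Finset.sum_boole, ← SimpleGraph.incidenceFinset_eq_filter,
    SimpleGraph.card_incidenceFinset_eq_degree]

lemma sq_sum_le_two_mul (z : W) (x : H.edgeSet → ℝ) (hd : H.degree z ≤ 2) :
    (∑ e : H.edgeSet, if z ∈ (e : Sym2 W) then x e else 0) ^ 2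
      ≤ 2 * ∑ e : H.edgeSet, if z ∈ (e : Sym2 W) then x e ^ 2 else 0 := by
  have cs := Finset.sum_mul_sq_le_sq_mul_sq Finset.univ
    (fun e : H.edgeSet => if z ∈ (e : Sym2 W) then (1:ℝ) else 0)
    (fun e : H.edgeSet => if z ∈ (e : Sym2 W) then x e else 0)
  have h1 : ∀ e : H.edgeSet, (if z ∈ (e : Sym2 W) then (1:ℝ) else 0) *
      (if z ∈ (e : Sym2 W) then x e else 0) = (if z ∈ (e : Sym2 W) then x e else 0) := by
    intro e; by_cases hz : z ∈ (e : Sym2 W) <;> simp [hz]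
  have h2 : ∀ e : H.edgeSet, (if z ∈ (e : Sym2 W) then (1:ℝ) else 0) ^ 2 =
      (if z ∈ (e : Sym2 W) then (1:ℝ) else 0) := by
    intro e; by_cases hz : z ∈ (e : Sym2 W) <;> simp [hz]
  have h3 : ∀ e : H.edgeSet, (if z ∈ (e : Sym2 W) then x e else 0) ^ 2 =
      (if z ∈ (e : Sym2 W) then x e ^ 2 else 0) := by
    intro e; by_cases hz : z ∈ (e : Sym2 W) <;> simp [hz]
  simp only [h1, h2, h3, sum_ind_eq_degree] at cs
  have hB : (0:ℝ) ≤ ∑ e : H.edgeSet, if z ∈ (e : Sym2 W) then x e ^ 2 else 0 := by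
    apply Finset.sum_nonneg
    intro e _
    by_cases hz : z ∈ (e : Sym2 W) <;> simp [hz] <;> positivity
  calc (∑ e : H.edgeSet, if z ∈ (e : Sym2 W) then x e else 0) ^ 2
      ≤ (H.degree z : ℝ) * ∑ e : H.edgeSet, if z ∈ (e : Sym2 W) then x e ^ 2 else 0 := cs
    _ ≤ 2 * ∑ e : H.edgeSet, if z ∈ (e : Sym2 W) then x e ^ 2 else 0 := by
        apply mul_le_mul_of_nonneg_right _ hB
        exact_mod_cast hd

lemma not_mem_of_degree_zero (z : W) (hz : H.degree z = 0) (e : H.edgeSet) :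
    z ∉ (e : Sym2 W) := by
  intro hmem
  obtain ⟨e', he'⟩ := e
  induction e' with
  | h a b =>
    rw [Sym2.mem_iff] at hmem
    have hadj : H.Adj a b := (SimpleGraph.mem_edgeSet _).mp he'
    rcases hmem with rfl | rfl
    · have : 0 < H.degree z := (SimpleGraph.degree_pos_iff_exists_adj H z).mpr ⟨b, hadj⟩
      omega
    · have : 0 < H.degree z := (SimpleGraph.degree_pos_iff_exists_adj H z).mpr ⟨a, hadj.symm⟩
      omega
variable {V : Type*} [Fintype V] [DecidableEq V] (G : SimpleGraph V) [DecidableRel G.Adj] (v : V)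

lemma degree_eq_sum' {W : Type*} [Fintype W] (H : SimpleGraph W) [DecidableRel H.Adj] (z : W) :
    H.degree z = ∑ u : W, if H.Adj z u then 1 else 0 := by
  rw [← SimpleGraph.card_neighborFinset_eq_degree, neighborFinset_eq_filter, Finset.card_filter]

lemma degree_addLeaves_inl (w : V) :
    (addLeaves G v 1).degree (Sum.inl w) = G.degree w + (if w = v then 1 else 0) := by
  rw [degree_eq_sum', degree_eq_sum', Fintype.sum_sum_type]
  refine congrArg₂ (· + ·) ?_ ?_
  · exact Finset.sum_congr rfl fun u _ => if_congr Iff.rfl rfl rfl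
  · rw [Fin.sum_univ_one]
    exact if_congr Iff.rfl rfl rfl

lemma degree_addLeaves_inr (j : Fin 1) :
    (addLeaves G v 1).degree (Sum.inr j) = 1 := by
  rw [degree_eq_sum', Fintype.sum_sum_type]
  have h1 : (∑ u : V, if (addLeaves G v 1).Adj (Sum.inr j) (Sum.inl u) then 1 else 0)
      = ∑ u : V, if u = v then 1 else 0 := by
    exact Finset.sum_congr rfl fun u _ => if_congr Iff.rfl rfl rfl
  have h2 : (∑ i : Fin 1, if (addLeaves G v 1).Adj (Sum.inr j) (Sum.inr i) then 1 else 0) = 0 := by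
    rw [Fin.sum_univ_one, if_neg]
    exact fun h => h
  rw [h1, h2, Finset.sum_ite_eq' Finset.univ v (fun _ => 1), if_pos (Finset.mem_univ v)]

end Deg
section Compare
variable {V : Type*} [Fintype V] [DecidableEq V] (G : SimpleGraph V) [DecidableRel G.Adj] (v : V)

lemma mem_ιe_iff (w : V) (e : G.edgeSet) :
    (Sum.inl w : V ⊕ Fin 1) ∈ ((ιe G v e : (addLeaves G v 1).edgeSet) : Sym2 (V ⊕ Fin 1))
      ↔ w ∈ (e : Sym2 V) := by
  show (Sum.inl w : V ⊕ Fin 1) ∈ Sym2.map Sum.inl (e : Sym2 V) ↔ _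
  rw [Sym2.mem_map]
  constructor
  · rintro ⟨a, ha, haeq⟩
    obtain rfl : a = w := Sum.inl_injective haeq
    exact ha
  · intro h; exact ⟨w, h, rfl⟩

lemma mem_estar_inl (w : V) :
    (Sum.inl w : V ⊕ Fin 1) ∈ ((estar G v : (addLeaves G v 1).edgeSet) : Sym2 (V ⊕ Fin 1))
      ↔ w = v := by
  show (Sum.inl w : V ⊕ Fin 1) ∈ s(Sum.inl v, Sum.inr 0) ↔ w = v
  rw [Sym2.mem_iff]
  simp

lemma not_mem_ιe_inr (j : Fin 1) (e : G.edgeSet) :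
    (Sum.inr j : V ⊕ Fin 1) ∉ ((ιe G v e : (addLeaves G v 1).edgeSet) : Sym2 (V ⊕ Fin 1)) :=
  inr_not_mem_map (e : Sym2 V) j

lemma quad_le (hdeg : G.degree v ≤ 2) (f : G.edgeSet → ℝ) :
    dotProduct f ((ricciMatrix G).mulVec f)
      ≤ dotProduct (extendLeaf G v f 0)
          ((ricciMatrix (addLeaves G v 1)).mulVec (extendLeaf G v f 0)) := by
  classical
  rw [ricci_quad, ricci_quad]
  have hgstar : extendLeaf G v f 0 (estar G v) = 0 := extendLeaf_estar G v f 0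
  -- sums over the big graph's edges, at an old vertex
  have hS : ∀ w : V,
      (∑ e' : (addLeaves G v 1).edgeSet,
        if (Sum.inl w : V ⊕ Fin 1) ∈ (e' : Sym2 (V ⊕ Fin 1)) then extendLeaf G v f 0 e' else 0)
      = ∑ e : G.edgeSet, if w ∈ (e : Sym2 V) then f e else 0 := by
    intro w
    rw [sum_edges_addLeaves]
    rw [Finset.sum_congr rfl fun e _ =>
      if_congr (mem_ιe_iff G v w e) (extendLeaf_ιe G v f 0 e) rfl]
    rw [hgstar, ite_self, add_zero]
  have hT : ∀ w : V,
      (∑ e' : (addLeaves G v 1).edgeSet,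
        if (Sum.inl w : V ⊕ Fin 1) ∈ (e' : Sym2 (V ⊕ Fin 1)) then extendLeaf G v f 0 e' ^ 2 else 0)
      = ∑ e : G.edgeSet, if w ∈ (e : Sym2 V) then f e ^ 2 else 0 := by
    intro w
    rw [sum_edges_addLeaves]
    rw [Finset.sum_congr rfl fun e _ =>
      if_congr (mem_ιe_iff G v w e) (by rw [extendLeaf_ιe G v f 0 e]) rfl]
    rw [hgstar]
    norm_num
  have hSr : ∀ j : Fin 1,
      (∑ e' : (addLeaves G v 1).edgeSet,
        if (Sum.inr j : V ⊕ Fin 1) ∈ (e' : Sym2 (V ⊕ Fin 1)) then extendLeaf G v f 0 e' else 0)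
      = 0 := by
    intro j
    rw [sum_edges_addLeaves]
    rw [Finset.sum_congr rfl fun e _ => if_neg (not_mem_ιe_inr G v j e)]
    rw [hgstar, ite_self, Finset.sum_const_zero, add_zero]
  have hTr : ∀ j : Fin 1,
      (∑ e' : (addLeaves G v 1).edgeSet,
        if (Sum.inr j : V ⊕ Fin 1) ∈ (e' : Sym2 (V ⊕ Fin 1)) then extendLeaf G v f 0 e' ^ 2 else 0)
      = 0 := by
    intro j
    rw [sum_edges_addLeaves]
    rw [Finset.sum_congr rfl fun e _ => if_neg (not_mem_ιe_inr G v j e)]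
    rw [hgstar]
    norm_num
  rw [Fintype.sum_sum_type]
  have hinr : (∑ j : Fin 1, (((addLeaves G v 1).degree (Sum.inr j) : ℝ))⁻¹ *
      ((∑ e' : (addLeaves G v 1).edgeSet,
        if (Sum.inr j : V ⊕ Fin 1) ∈ (e' : Sym2 (V ⊕ Fin 1)) then extendLeaf G v f 0 e' else 0) ^ 2
        - 2 * ∑ e' : (addLeaves G v 1).edgeSet,
          if (Sum.inr j : V ⊕ Fin 1) ∈ (e' : Sym2 (V ⊕ Fin 1)) then extendLeaf G v f 0 e' ^ 2
            else 0)) = 0 := by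
    rw [Fin.sum_univ_one, hSr 0, hTr 0]
    ring
  rw [hinr, add_zero]
  have h2 : (∑ w : V, (((addLeaves G v 1).degree (Sum.inl w) : ℝ))⁻¹ *
      ((∑ e' : (addLeaves G v 1).edgeSet,
        if (Sum.inl w : V ⊕ Fin 1) ∈ (e' : Sym2 (V ⊕ Fin 1)) then extendLeaf G v f 0 e' else 0) ^ 2
        - 2 * ∑ e' : (addLeaves G v 1).edgeSet,
          if (Sum.inl w : V ⊕ Fin 1) ∈ (e' : Sym2 (V ⊕ Fin 1)) then extendLeaf G v f 0 e' ^ 2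
            else 0))
      = ∑ w : V, ((((G.degree w + if w = v then 1 else 0 : ℕ)) : ℝ))⁻¹ *
      ((∑ e : G.edgeSet, if w ∈ (e : Sym2 V) then f e else 0) ^ 2
        - 2 * ∑ e : G.edgeSet, if w ∈ (e : Sym2 V) then f e ^ 2 else 0) :=
    Finset.sum_congr rfl fun w _ => by rw [hS w, hT w, degree_addLeaves_inl G v w]
  rw [h2, ← sub_nonneg, ← Finset.sum_sub_distrib]
  have h3 : (∑ w : V, (((((G.degree w + if w = v then 1 else 0 : ℕ)) : ℝ))⁻¹ *
      ((∑ e : G.edgeSet, if w ∈ (e : Sym2 V) then f e else 0) ^ 2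
        - 2 * ∑ e : G.edgeSet, if w ∈ (e : Sym2 V) then f e ^ 2 else 0)
      - ((G.degree w : ℝ))⁻¹ *
      ((∑ e : G.edgeSet, if w ∈ (e : Sym2 V) then f e else 0) ^ 2
        - 2 * ∑ e : G.edgeSet, if w ∈ (e : Sym2 V) then f e ^ 2 else 0)))
      = ∑ w : V, ((((G.degree w + if w = v then 1 else 0 : ℕ) : ℝ))⁻¹ - ((G.degree w : ℝ))⁻¹) *
      ((∑ e : G.edgeSet, if w ∈ (e : Sym2 V) then f e else 0) ^ 2
        - 2 * ∑ e : G.edgeSet, if w ∈ (e : Sym2 V) then f e ^ 2 else 0) :=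
    Finset.sum_congr rfl fun w _ => by ring
  rw [h3, Finset.sum_eq_single v]
  · -- the term at v is nonnegative
    by_cases hd0 : G.degree v = 0
    · have hSv : (∑ e : G.edgeSet, if v ∈ (e : Sym2 V) then f e else 0) = 0 :=
        Finset.sum_eq_zero fun e _ => if_neg (not_mem_of_degree_zero G v hd0 e)
      have hTv : (∑ e : G.edgeSet, if v ∈ (e : Sym2 V) then f e ^ 2 else 0) = 0 :=
        Finset.sum_eq_zero fun e _ => if_neg (not_mem_of_degree_zero G v hd0 e)
      rw [hSv, hTv]
      simp
    · have hd1 : (1:ℝ) ≤ (G.degree v : ℝ) := by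
        have : 1 ≤ G.degree v := Nat.one_le_iff_ne_zero.mpr hd0
        exact_mod_cast this
      have ha : ((((G.degree v + if v = v then 1 else 0 : ℕ)) : ℝ))⁻¹ - ((G.degree v : ℝ))⁻¹
          ≤ 0 := by
        rw [sub_nonpos, if_pos rfl]
        apply inv_anti₀ (by linarith)
        push_cast
        linarith
      have hb : (∑ e : G.edgeSet, if v ∈ (e : Sym2 V) then f e else 0) ^ 2
          - 2 * (∑ e : G.edgeSet, if v ∈ (e : Sym2 V) then f e ^ 2 else 0) ≤ 0 := by
        rw [sub_nonpos]
        exact sq_sum_le_two_mul G v f hdeg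
      nlinarith [ha, hb]
  · intro w _ hw
    rw [if_neg hw]
    simp
  · intro hv
    exact absurd (Finset.mem_univ v) hv

end Compare

section Final
variable {V : Type*} [Fintype V] [DecidableEq V] (G : SimpleGraph V) [DecidableRel G.Adj] (v : V)

lemma dot_extend (f : G.edgeSet → ℝ) :
    dotProduct (extendLeaf G v f 0) (extendLeaf G v f 0) = dotProduct f f := by
  simp only [dotProduct]
  rw [sum_edges_addLeaves G v (fun e' => extendLeaf G v f 0 e' * extendLeaf G v f 0 e')]
  rw [extendLeaf_estar, mul_zero, add_zero]
  exact Finset.sum_congr rfl fun e _ => by rw [extendLeaf_ιe]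


end Final

/-- Attaching a pendant edge at a vertex of degree at most `2` of a finite tree with at
least one edge does not decrease the largest eigenvalue of the Ricci matrix. -/
theorem lambdaMax_mono_of_degree_le_two {V : Type*} [Fintype V] [DecidableEq V]
    (G : SimpleGraph V) [DecidableRel G.Adj]
    (hT : G.IsTree) (h1 : 1 ≤ G.edgeFinset.card) (v : V) (hdeg : G.degree v ≤ 2) :
    lambdaMax (ricciMatrix G) ≤ lambdaMax (ricciMatrix (addLeaves G v 1)) := by
  classical
  have hne : Nonempty G.edgeSet := by
    obtain ⟨e, he⟩ := Finset.card_pos.mp h1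
    exact ⟨⟨e, SimpleGraph.mem_edgeFinset.mp he⟩⟩
  have hne' : Nonempty ((addLeaves G v 1).edgeSet) := ⟨estar G v⟩
  obtain ⟨⟨f, hf0, hfe⟩, -⟩ := lambdaMax_spec (ricciMatrix G) (ricci_isSymm G)
  obtain ⟨-, hub⟩ := lambdaMax_spec (ricciMatrix (addLeaves G v 1)) (ricci_isSymm _)
  have hg0 : extendLeaf G v f 0 ≠ 0 := by
    intro h
    apply hf0
    funext e
    have h' := congrFun h (ιe G v e)
    rw [extendLeaf_ιe] at h'
    simpa using h'
  have hquad := quad_le G v hdeg f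
  have hgg := dot_extend G v f
  have hfpos : 0 < dotProduct f f := by
    obtain ⟨e, he⟩ := Function.ne_iff.mp hf0
    have he' : f e ≠ 0 := by simpa using he
    exact Finset.sum_pos' (fun i _ => mul_self_nonneg (f i))
      ⟨e, Finset.mem_univ e, mul_self_pos.mpr he'⟩
  have heig : dotProduct f ((ricciMatrix G).mulVec f)
      = lambdaMax (ricciMatrix G) * dotProduct f f := by
    rw [hfe, dotProduct_smul, smul_eq_mul]
  have hub' := hub _ hg0
  rw [hgg] at hub'
  have hchain : lambdaMax (ricciMatrix G) * dotProduct f f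
      ≤ lambdaMax (ricciMatrix (addLeaves G v 1)) * dotProduct f f := by
    rw [← heig]
    exact hquad.trans hub'
  exact le_of_mul_le_mul_right hchain hfpos
end
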